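/- Let (u_{mn}) be a double sequence of complex numbers whose logarithmic means σ_{mn} = (1/(P_mQ_n)) Σ_{i=0}^m Σ_{j=0}^n u_{ij}/((i+1)(j+1)), with P_m = Σ_{i=0}^m 1/(i+1) and Q_n = Σ_{j=0}^n 1/(j+1), converge to ℓ in Pringsheim's sense. If there exists M > 0 such that m·log(m+1)·|u_{mn} − u_{m−1,n}| ≤ M and n·log(n+1)·|u_{mn} − u_{m,n−1}| ≤ M for all sufficiently large m, n, then (u_{mn}) converges to ℓ in Pringsheim's sense. -/

import Mathlib

open Finset Filter

private lemma osc_aux (v : ℕ → ℂ) (g : ℕ → ℝ) (m : ℕ)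
    (hstep : ∀ k, m < k → ‖v k - v (k - 1)‖ ≤ g k - g (k - 1)) :
    ∀ i, m ≤ i → ‖v i - v m‖ ≤ g i - g m := by
  intro i hi
  induction i, hi using Nat.le_induction with
  | base => simp
  | succ i hi ih =>
    have h1 := hstep (i + 1) (by omega)
    simp only [Nat.add_sub_cancel] at h1
    calc ‖v (i + 1) - v m‖ ≤ ‖v (i + 1) - v i‖ + ‖v i - v m‖ := by
          have := dist_triangle (v (i + 1)) (v i) (v m)
          simpa [dist_eq_norm] using this
      _ ≤ (g (i + 1) - g i) + (g i - g m) := add_le_add h1 ih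
      _ = g (i + 1) - g m := by ring

private lemma log_ge_one (k : ℕ) (hk : 2 ≤ k) : 1 ≤ Real.log ((k : ℝ) + 1) := by
  have h3 : (3 : ℝ) ≤ (k : ℝ) + 1 := by
    have : (2 : ℝ) ≤ (k : ℝ) := by exact_mod_cast hk
    linarith
  have he : Real.exp 1 ≤ 3 := by
    have := Real.exp_one_lt_d9
    linarith
  calc (1 : ℝ) = Real.log (Real.exp 1) := (Real.log_exp 1).symm
    _ ≤ Real.log ((k : ℝ) + 1) := Real.log_le_log (Real.exp_pos 1) (le_trans he h3)

private lemma hardy_step (M : ℝ) (hM : 0 < M) (k : ℕ) (hk : 2 ≤ k) (d : ℝ)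
    (hH : (k : ℝ) * Real.log ((k : ℝ) + 1) * d ≤ M) (Pk : ℝ)
    (hPk : Pk ≤ 1 + Real.log ((k : ℝ) + 1)) (hPk1 : 1 ≤ Pk) :
    d ≤ (4 * M) * (1 / ((k : ℝ) + 1)) / Pk := by
  have hL := log_ge_one k hk
  set L := Real.log ((k : ℝ) + 1)
  have hkr : (2 : ℝ) ≤ (k : ℝ) := by exact_mod_cast hk
  have h1 : d ≤ M / ((k : ℝ) * L) := by
    rw [le_div_iff₀ (by nlinarith)]
    nlinarith
  have h2 : M / ((k : ℝ) * L) ≤ (4 * M) * (1 / ((k : ℝ) + 1)) / Pk := by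
    rw [div_le_div_iff₀ (by nlinarith) (by nlinarith)]
    have hcross : ((k : ℝ) + 1) * Pk ≤ 4 * ((k : ℝ) * L) := by nlinarith
    calc M * Pk ≤ M * Pk := le_refl _
      _ ≤ 4 * M * (1 / ((k : ℝ) + 1)) * ((k : ℝ) * L) := by
        rw [mul_one_div, div_mul_eq_mul_div, le_div_iff₀ (by nlinarith)]
        nlinarith
  linarith

set_option maxHeartbeats 1600000 in
/-- Logarithmic means specialization of the Hardy-type Tauberian theorem for complex
double sequences. -/
theorem stmt15 (u : ℕ → ℕ → ℂ) (ℓ : ℂ)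
    (P Q : ℕ → ℝ)
    (hP : ∀ m : ℕ, P m = ∑ i ∈ Finset.range (m + 1), (1 : ℝ) / ((i : ℝ) + 1))
    (hQ : ∀ n : ℕ, Q n = ∑ j ∈ Finset.range (n + 1), (1 : ℝ) / ((j : ℝ) + 1))
    (σ : ℕ → ℕ → ℂ)
    (hσ : ∀ m n : ℕ, σ m n =
      (∑ i ∈ Finset.range (m + 1), ∑ j ∈ Finset.range (n + 1),
        u i j / (((i : ℂ) + 1) * ((j : ℂ) + 1))) / ((P m * Q n : ℝ) : ℂ))
    (hsum : ∀ ε > (0 : ℝ), ∃ n₀ : ℕ, ∀ m n : ℕ, n₀ ≤ m → n₀ ≤ n → ‖σ m n - ℓ‖ < ε)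
    (M : ℝ) (hM : 0 < M)
    (hHardy : ∃ n₁ : ℕ, ∀ m n : ℕ, n₁ ≤ m → n₁ ≤ n →
      (m : ℝ) * Real.log ((m : ℝ) + 1) * ‖u m n - u (m - 1) n‖ ≤ M ∧
      (n : ℝ) * Real.log ((n : ℝ) + 1) * ‖u m n - u m (n - 1)‖ ≤ M) :
    ∀ ε > (0 : ℝ), ∃ n₀ : ℕ, ∀ m n : ℕ, n₀ ≤ m → n₀ ≤ n → ‖u m n - ℓ‖ < ε := by
  classical
  set p : ℕ → ℝ := fun i => 1 / ((i : ℝ) + 1) with hp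
  have hppos : ∀ i, 0 < p i := fun i => by positivity
  have hple : ∀ i, p i ≤ 1 := fun i => by
    rw [hp]; rw [div_le_one (by positivity)]; simp
  have hPpos : ∀ m, 0 < P m := by
    intro m; rw [hP]
    exact Finset.sum_pos (fun i _ => hppos i) (Finset.nonempty_range_iff.mpr (Nat.succ_ne_zero m))
  have hPmono : Monotone P := by
    intro a b hab
    rw [hP, hP]
    exact Finset.sum_le_sum_of_subset_of_nonneg
      (Finset.range_subset_range.mpr (by omega)) (fun i _ _ => (hppos i).le)
  have hP1 : ∀ m, 1 ≤ P m := by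
    intro m
    have h0 : p 0 ≤ P m := by
      rw [hP]
      exact Finset.single_le_sum (fun i _ => (hppos i).le) (Finset.mem_range.mpr (by omega))
    simpa [hp] using h0
  have hPsucc : ∀ k : ℕ, P (k + 1) = P k + p (k + 1) := by
    intro k; rw [hP, hP, Finset.sum_range_succ]
  have hPub : ∀ k : ℕ, P k ≤ 1 + Real.log ((k : ℝ) + 1) := by
    intro k
    have hPh : P k = (harmonic (k + 1) : ℝ) := by
      rw [hP, harmonic]
      push_cast
      simp only [hp, one_div]
    rw [hPh]
    have := harmonic_le_one_add_log (k + 1)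
    push_cast at this ⊢
    linarith
  have hPtop : Tendsto P atTop atTop := by
    have h := Real.tendsto_sum_range_one_div_nat_succ_atTop
    have h2 : Tendsto (fun m : ℕ => ∑ i ∈ Finset.range (m + 1), (1 / (i + 1) : ℝ)) atTop atTop :=
      h.comp (tendsto_add_atTop_nat 1)
    convert h2 using 2 with m
    rw [hP]
  have hQP : ∀ k, Q k = P k := fun k => by rw [hQ, hP]
  obtain ⟨n₁, hH⟩ := hHardy
  set n₂ := max n₁ 2 with hn₂
  -- step bounds
  have hstep1 : ∀ k j : ℕ, n₂ ≤ k → n₂ ≤ j → ‖u k j - u (k - 1) j‖ ≤ 4 * M * p k / P k := by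
    intro k j hk hj
    have hk2 : 2 ≤ k := le_trans (le_max_right _ _) hk
    have hHk := (hH k j (le_trans (le_max_left _ _) hk) (le_trans (le_max_left _ _) hj)).1
    have := hardy_step M hM k hk2 _ hHk (P k) (hPub k) (hP1 k)
    simpa [hp] using this
  have hstep2 : ∀ i k : ℕ, n₂ ≤ i → n₂ ≤ k → ‖u i k - u i (k - 1)‖ ≤ 4 * M * p k / P k := by
    intro i k hi hk
    have hk2 : 2 ≤ k := le_trans (le_max_right _ _) hk
    have hHk := (hH i k (le_trans (le_max_left _ _) hi) (le_trans (le_max_left _ _) hk)).2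
    have := hardy_step M hM k hk2 _ hHk (P k) (hPub k) (hP1 k)
    simpa [hp] using this
  -- the partial sums
  have hne : ∀ i : ℕ, ((i : ℂ) + 1) ≠ 0 := by
    intro i
    have : ((i + 1 : ℕ) : ℂ) ≠ 0 := Nat.cast_ne_zero.mpr (Nat.succ_ne_zero i)
    push_cast at this
    exact this
  set t : ℕ → ℕ → ℂ := fun i j => u i j / (((i : ℂ) + 1) * ((j : ℂ) + 1)) with ht
  set S : ℕ → ℕ → ℂ := fun a b => ∑ i ∈ Finset.range (a + 1), ∑ j ∈ Finset.range (b + 1), t i j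
    with hS
  have hcast : ∀ i j : ℕ, t i j = ((p i * p j : ℝ) : ℂ) * u i j := by
    intro i j
    simp only [ht, hp]
    push_cast
    field_simp
  have hsσ : ∀ a b : ℕ, S a b = σ a b * ((P a * P b : ℝ) : ℂ) := by
    intro a b
    have h := hσ a b
    rw [hQP b] at h
    have hc : ((P a * P b : ℝ) : ℂ) ≠ 0 :=
      Complex.ofReal_ne_zero.mpr (mul_pos (hPpos a) (hPpos b)).ne'
    rw [hS, h]
    exact (div_mul_cancel₀ _ hc).symm
  -- main argument
  intro ε hε
  obtain ⟨η, hη0, hη1, hηM⟩ : ∃ η : ℝ, 0 < η ∧ η ≤ 1 ∧ 16 * M * η ≤ ε / 4 := by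
    refine ⟨min 1 (ε / (64 * (M + 1))), lt_min one_pos (by positivity), min_le_left _ _, ?_⟩
    have h := min_le_right 1 (ε / (64 * (M + 1)))
    have h0 : (0:ℝ) ≤ min 1 (ε / (64 * (M + 1))) :=
      (lt_min one_pos (by positivity)).le
    rw [le_div_iff₀ (by positivity)] at h
    nlinarith
  obtain ⟨δ, hδ0, hδdef⟩ : ∃ δ : ℝ, 0 < δ ∧ δ = ε * η ^ 2 / 256 := ⟨_, by positivity, rfl⟩
  obtain ⟨Nσ, hNσ⟩ := hsum δ hδ0
  obtain ⟨NP, hNP⟩ := eventually_atTop.mp (hPtop.eventually_ge_atTop (1 / η))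
  -- block selection
  have key : ∀ a : ℕ, ∃ b, a < b ∧ (1 + η) * P a ≤ P b ∧ P b ≤ (1 + η) * P a + 1 := by
    intro a
    have hex : ∃ b, a < b ∧ (1 + η) * P a ≤ P b := by
      have h1 : ∀ᶠ b in atTop, (1 + η) * P a ≤ P b := hPtop.eventually_ge_atTop _
      have h2 : ∀ᶠ b : ℕ in atTop, a < b := eventually_gt_atTop a
      exact (h2.and h1).exists
    obtain ⟨hab, hlow⟩ := Nat.find_spec hex
    refine ⟨Nat.find hex, hab, hlow, ?_⟩
    have hfind1 : 1 ≤ Nat.find hex := by omega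
    set c := Nat.find hex - 1 with hc
    have hbc : Nat.find hex = c + 1 := by omega
    have hmin := Nat.find_min hex (show c < Nat.find hex by omega)
    push_neg at hmin
    have hPc : P c ≤ (1 + η) * P a := by
      by_cases hac : a < c
      · exact (hmin hac).le
      · have hca : c ≤ a := by omega
        have h := hPmono hca
        nlinarith [hPpos a, hη0.le]
    rw [hbc, hPsucc c]
    linarith [hple (c + 1)]
  refine ⟨n₂ + Nσ + NP, fun m n hm hn => ?_⟩
  have hmn2 : n₂ ≤ m := by omega
  have hnn2 : n₂ ≤ n := by omega
  -- oscillation bounds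
  have hosc1 : ∀ j, n₂ ≤ j → ∀ i, m ≤ i →
      ‖u i j - u m j‖ ≤ 4 * M / P m * P i - 4 * M / P m * P m := by
    intro j hj i hi
    refine osc_aux (fun k => u k j) (fun k => 4 * M / P m * P k) m ?_ i hi
    intro k hk
    obtain ⟨k', rfl⟩ : ∃ k', k = k' + 1 := ⟨k - 1, by omega⟩
    simp only [Nat.add_sub_cancel]
    have h1 := hstep1 (k' + 1) j (by omega) hj
    simp only [Nat.add_sub_cancel] at h1
    have h2 : 4 * M * p (k' + 1) / P (k' + 1) ≤ 4 * M * p (k' + 1) / P m := by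
      gcongr
      · exact hPpos m
      · exact hPmono (by omega)
    have h3 : (4 : ℝ) * M / P m * P (k' + 1) - 4 * M / P m * P k' = 4 * M * p (k' + 1) / P m := by
      rw [hPsucc k']
      field_simp
      ring
    rw [h3]
    linarith
  have hosc2 : ∀ i, n₂ ≤ i → ∀ j, n ≤ j →
      ‖u i j - u i n‖ ≤ 4 * M / P n * P j - 4 * M / P n * P n := by
    intro i hi j hj
    refine osc_aux (fun k => u i k) (fun k => 4 * M / P n * P k) n ?_ j hj
    intro k hk
    obtain ⟨k', rfl⟩ : ∃ k', k = k' + 1 := ⟨k - 1, by omega⟩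
    simp only [Nat.add_sub_cancel]
    have h1 := hstep2 i (k' + 1) hi (by omega)
    simp only [Nat.add_sub_cancel] at h1
    have h2 : 4 * M * p (k' + 1) / P (k' + 1) ≤ 4 * M * p (k' + 1) / P n := by
      gcongr
      · exact hPpos n
      · exact hPmono (by omega)
    have h3 : (4 : ℝ) * M / P n * P (k' + 1) - 4 * M / P n * P k' = 4 * M * p (k' + 1) / P n := by
      rw [hPsucc k']
      field_simp
      ring
    rw [h3]
    linarith
  -- block choice
  obtain ⟨m', hmm', hlowm, hupm⟩ := key m
  obtain ⟨n', hnn', hlown, hupn⟩ := key n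
  have hPm : 1 / η ≤ P m := hNP m (by omega)
  have hPn : 1 / η ≤ P n := hNP n (by omega)
  have hηPm : 1 ≤ η * P m := by
    rw [div_le_iff₀ hη0] at hPm; linarith [hPm, (mul_comm (P m) η)]
  have hηPn : 1 ≤ η * P n := by
    rw [div_le_iff₀ hη0] at hPn; linarith [hPn, (mul_comm (P n) η)]
  have hexpm : (1 + η) * P m = P m + η * P m := by ring
  have hexpn : (1 + η) * P n = P n + η * P n := by ring
  have hηPm' : η * P m ≤ P m := mul_le_of_le_one_left (hPpos m).le hη1
  have hηPn' : η * P n ≤ P n := mul_le_of_le_one_left (hPpos n).le hη1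
  have hA1 : η * P m ≤ P m' - P m := by linarith
  have hA2 : P m' - P m ≤ 2 * η * P m := by linarith
  have hA3 : P m' ≤ 3 * P m := by linarith
  have hB1 : η * P n ≤ P n' - P n := by linarith
  have hB2 : P n' - P n ≤ 2 * η * P n := by linarith
  have hB3 : P n' ≤ 3 * P n := by linarith
  have hΔPpos : 0 < P m' - P m := lt_of_lt_of_le (by positivity) hA1
  have hΔQpos : 0 < P n' - P n := lt_of_lt_of_le (by positivity) hB1
  -- weight sums
  have hWm : ∑ i ∈ Finset.Ico (m + 1) (m' + 1), p i = P m' - P m := by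
    rw [Finset.sum_Ico_eq_sub _ (by omega : m + 1 ≤ m' + 1), hP m', hP m]
  have hWn : ∑ j ∈ Finset.Ico (n + 1) (n' + 1), p j = P n' - P n := by
    rw [Finset.sum_Ico_eq_sub _ (by omega : n + 1 ≤ n' + 1), hP n', hP n]
  set B : ℂ := ∑ i ∈ Finset.Ico (m + 1) (m' + 1), ∑ j ∈ Finset.Ico (n + 1) (n' + 1), t i j
    with hBdef
  have hBlock : B = S m' n' - S m n' - (S m' n - S m n) := by
    have hinner : ∀ i : ℕ, (∑ j ∈ Finset.Ico (n + 1) (n' + 1), t i j)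
        = (∑ j ∈ Finset.range (n' + 1), t i j) - ∑ j ∈ Finset.range (n + 1), t i j :=
      fun i => Finset.sum_Ico_eq_sub _ (by omega)
    calc B = ∑ i ∈ Finset.Ico (m + 1) (m' + 1),
            ((∑ j ∈ Finset.range (n' + 1), t i j) - ∑ j ∈ Finset.range (n + 1), t i j) := by
          rw [hBdef]
          exact Finset.sum_congr rfl fun i _ => hinner i
      _ = (∑ i ∈ Finset.Ico (m + 1) (m' + 1), ∑ j ∈ Finset.range (n' + 1), t i j)
          - ∑ i ∈ Finset.Ico (m + 1) (m' + 1), ∑ j ∈ Finset.range (n + 1), t i j :=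
          Finset.sum_sub_distrib _ _
      _ = S m' n' - S m n' - (S m' n - S m n) := by
          rw [Finset.sum_Ico_eq_sub _ (by omega : m + 1 ≤ m' + 1),
              Finset.sum_Ico_eq_sub _ (by omega : m + 1 ≤ m' + 1)]
  have hsℓ : ∀ a b : ℕ, Nσ ≤ a → Nσ ≤ b →
      ‖S a b - ((P a * P b : ℝ) : ℂ) * ℓ‖ ≤ P a * P b * δ := by
    intro a b ha hb
    rw [hsσ a b]
    have he : σ a b * ((P a * P b : ℝ) : ℂ) - ((P a * P b : ℝ) : ℂ) * ℓ
        = ((P a * P b : ℝ) : ℂ) * (σ a b - ℓ) := by ring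
    rw [he, norm_mul, Complex.norm_real, Real.norm_eq_abs,
      abs_of_pos (mul_pos (hPpos a) (hPpos b))]
    exact mul_le_mul_of_nonneg_left (hNσ a b ha hb).le (mul_pos (hPpos a) (hPpos b)).le
  obtain ⟨W, hW⟩ : ∃ W : ℝ, W = (P m' - P m) * (P n' - P n) := ⟨_, rfl⟩
  have hWpos : 0 < W := hW ▸ mul_pos hΔPpos hΔQpos
  have hWsum : ((W : ℝ) : ℂ)
      = ∑ i ∈ Finset.Ico (m + 1) (m' + 1), ∑ j ∈ Finset.Ico (n + 1) (n' + 1),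
          ((p i * p j : ℝ) : ℂ) := by
    rw [hW, ← hWm, ← hWn, Finset.sum_mul_sum]
    push_cast
    rfl
  -- oscillation of u over the block
  have hoscb : ∀ i ∈ Finset.Ico (m + 1) (m' + 1), ∀ j ∈ Finset.Ico (n + 1) (n' + 1),
      ‖u i j - u m n‖ ≤ ε / 4 := by
    intro i hi j hj
    rw [Finset.mem_Ico] at hi hj
    have h1 := hosc1 j (by omega) i (by omega)
    have h2 := hosc2 m hmn2 j (by omega)
    have hPi : P i ≤ P m' := hPmono (by omega)
    have hPj : P j ≤ P n' := hPmono (by omega)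
    have hdm : (0:ℝ) < P m := hPpos m
    have hdn : (0:ℝ) < P n := hPpos n
    have h1' : 4 * M / P m * P i - 4 * M / P m * P m ≤ 8 * M * η := by
      have hmul : 4 * M / P m * (P i - P m) ≤ 4 * M / P m * (2 * η * P m) := by
        apply mul_le_mul_of_nonneg_left _ (by positivity)
        linarith
      have heq : 4 * M / P m * (2 * η * P m) = 8 * M * η := by
        field_simp
        ring
      linarith [hmul, heq,
        (by ring : 4 * M / P m * P i - 4 * M / P m * P m = 4 * M / P m * (P i - P m))]
    have h2' : 4 * M / P n * P j - 4 * M / P n * P n ≤ 8 * M * η := by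
      have hmul : 4 * M / P n * (P j - P n) ≤ 4 * M / P n * (2 * η * P n) := by
        apply mul_le_mul_of_nonneg_left _ (by positivity)
        linarith
      have heq : 4 * M / P n * (2 * η * P n) = 8 * M * η := by
        field_simp
        ring
      linarith [hmul, heq,
        (by ring : 4 * M / P n * P j - 4 * M / P n * P n = 4 * M / P n * (P j - P n))]
    have tri : ‖u i j - u m n‖ ≤ ‖u i j - u m j‖ + ‖u m j - u m n‖ := by
      have := dist_triangle (u i j) (u m j) (u m n)
      simpa [dist_eq_norm] using this
    linarith
  -- Claim 1
  have hclaim1 : ‖B - ((W : ℝ) : ℂ) * u m n‖ ≤ W * (ε / 4) := by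
    have hrw : B - ((W : ℝ) : ℂ) * u m n
        = ∑ i ∈ Finset.Ico (m + 1) (m' + 1), ∑ j ∈ Finset.Ico (n + 1) (n' + 1),
            ((p i * p j : ℝ) : ℂ) * (u i j - u m n) := by
      rw [hBdef, hWsum, Finset.sum_mul, ← Finset.sum_sub_distrib]
      refine Finset.sum_congr rfl fun i _ => ?_
      rw [Finset.sum_mul, ← Finset.sum_sub_distrib]
      refine Finset.sum_congr rfl fun j _ => ?_
      rw [hcast i j]; ring
    rw [hrw]
    have hstepb : ∀ i ∈ Finset.Ico (m + 1) (m' + 1),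
        ‖∑ j ∈ Finset.Ico (n + 1) (n' + 1), ((p i * p j : ℝ) : ℂ) * (u i j - u m n)‖
        ≤ ∑ j ∈ Finset.Ico (n + 1) (n' + 1), p i * p j * (ε / 4) := by
      intro i hi
      refine (norm_sum_le _ _).trans (Finset.sum_le_sum fun j hj => ?_)
      rw [norm_mul, Complex.norm_real, Real.norm_eq_abs,
        abs_of_pos (mul_pos (hppos i) (hppos j))]
      exact mul_le_mul_of_nonneg_left (hoscb i hi j hj) (mul_pos (hppos i) (hppos j)).le
    calc ‖∑ i ∈ Finset.Ico (m + 1) (m' + 1), ∑ j ∈ Finset.Ico (n + 1) (n' + 1),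
            ((p i * p j : ℝ) : ℂ) * (u i j - u m n)‖
        ≤ ∑ i ∈ Finset.Ico (m + 1) (m' + 1),
            ‖∑ j ∈ Finset.Ico (n + 1) (n' + 1), ((p i * p j : ℝ) : ℂ) * (u i j - u m n)‖ :=
          norm_sum_le _ _
      _ ≤ ∑ i ∈ Finset.Ico (m + 1) (m' + 1), ∑ j ∈ Finset.Ico (n + 1) (n' + 1),
            p i * p j * (ε / 4) := Finset.sum_le_sum hstepb
      _ = W * (ε / 4) := by
          rw [hW, ← hWm, ← hWn, Finset.sum_mul_sum, Finset.sum_mul]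
          refine Finset.sum_congr rfl fun i _ => ?_
          rw [Finset.sum_mul]
  -- Claim 2
  have hclaim2 : ‖B - ((W : ℝ) : ℂ) * ℓ‖ ≤ 4 * (P m' * P n') * δ := by
    rw [hBlock]
    have hWc : ((W : ℝ) : ℂ) * ℓ
        = ((P m' * P n' : ℝ) : ℂ) * ℓ - ((P m * P n' : ℝ) : ℂ) * ℓ
          - (((P m' * P n : ℝ) : ℂ) * ℓ - ((P m * P n : ℝ) : ℂ) * ℓ) := by
      rw [hW]; push_cast; ring
    have h1 := hsℓ m' n' (by omega) (by omega)
    have h2 := hsℓ m n' (by omega) (by omega)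
    have h3 := hsℓ m' n (by omega) (by omega)
    have h4 := hsℓ m n (by omega) (by omega)
    have e : S m' n' - S m n' - (S m' n - S m n) - ((W : ℝ) : ℂ) * ℓ
        = ((S m' n' - ((P m' * P n' : ℝ) : ℂ) * ℓ) - (S m n' - ((P m * P n' : ℝ) : ℂ) * ℓ))
          - ((S m' n - ((P m' * P n : ℝ) : ℂ) * ℓ) - (S m n - ((P m * P n : ℝ) : ℂ) * ℓ)) := by
      rw [hWc]; ring
    rw [e]
    have hmono : ∀ a b : ℕ, a ≤ m' → b ≤ n' → P a * P b * δ ≤ P m' * P n' * δ := by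
      intro a b ha hb
      have h := mul_le_mul (hPmono ha) (hPmono hb) (hPpos b).le (hPpos m').le
      exact mul_le_mul_of_nonneg_right h hδ0.le
    have t1 := (norm_sub_le (S m' n' - ((P m' * P n' : ℝ) : ℂ) * ℓ)
      (S m n' - ((P m * P n' : ℝ) : ℂ) * ℓ))
    have t2 := (norm_sub_le (S m' n - ((P m' * P n : ℝ) : ℂ) * ℓ)
      (S m n - ((P m * P n : ℝ) : ℂ) * ℓ))
    have t0 := norm_sub_le
      ((S m' n' - ((P m' * P n' : ℝ) : ℂ) * ℓ) - (S m n' - ((P m * P n' : ℝ) : ℂ) * ℓ))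
      ((S m' n - ((P m' * P n : ℝ) : ℂ) * ℓ) - (S m n - ((P m * P n : ℝ) : ℂ) * ℓ))
    have b1 := hmono m' n' le_rfl le_rfl
    have b2 := hmono m n' (by omega) le_rfl
    have b3 := hmono m' n le_rfl (by omega)
    have b4 := hmono m n (by omega) (by omega)
    calc ‖((S m' n' - ((P m' * P n' : ℝ) : ℂ) * ℓ) - (S m n' - ((P m * P n' : ℝ) : ℂ) * ℓ))
          - ((S m' n - ((P m' * P n : ℝ) : ℂ) * ℓ) - (S m n - ((P m * P n : ℝ) : ℂ) * ℓ))‖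
        ≤ _ := t0
      _ ≤ 4 * (P m' * P n') * δ := by linarith
  -- final assembly
  have hnormW : ‖((W : ℝ) : ℂ) * (u m n - ℓ)‖ = W * ‖u m n - ℓ‖ := by
    rw [norm_mul, Complex.norm_real, Real.norm_eq_abs, abs_of_pos hWpos]
  have htri : W * ‖u m n - ℓ‖ ≤ W * (ε / 4) + 4 * (P m' * P n') * δ := by
    have hsplit : ((W : ℝ) : ℂ) * (u m n - ℓ)
        = (((W : ℝ) : ℂ) * u m n - B) + (B - ((W : ℝ) : ℂ) * ℓ) := by ring
    rw [← hnormW, hsplit]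
    refine (norm_add_le _ _).trans (add_le_add ?_ hclaim2)
    rw [norm_sub_rev]
    exact hclaim1
  have h4 : 4 * (P m' * P n') * δ ≤ W * (ε / 4) := by
    have hPP : P m' * P n' ≤ 9 * (P m * P n) := by
      have h := mul_le_mul hA3 hB3 (hPpos n').le (by linarith [hPpos m] : (0:ℝ) ≤ 3 * P m)
      linarith [h, (by ring : 3 * P m * (3 * P n) = 9 * (P m * P n))]
    have hWlb : η ^ 2 * (P m * P n) ≤ W := by
      have h := mul_le_mul hA1 hB1 (by positivity) hΔPpos.le
      rw [hW]
      linarith [h, (by ring : η * P m * (η * P n) = η ^ 2 * (P m * P n))]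
    calc 4 * (P m' * P n') * δ ≤ 4 * (9 * (P m * P n)) * δ := by
          have := mul_le_mul_of_nonneg_right hPP hδ0.le
          linarith
      _ = 36 * (P m * P n) * (ε * η ^ 2 / 256) := by rw [hδdef]; ring
      _ ≤ 64 * (P m * P n) * (ε * η ^ 2 / 256) := by
          have h1 : (0:ℝ) ≤ (P m * P n) * (ε * η ^ 2 / 256) :=
            mul_nonneg (mul_pos (hPpos m) (hPpos n)).le (le_of_lt (by positivity))
          linarith [h1, (by ring : 36 * (P m * P n) * (ε * η ^ 2 / 256) =
            36 * ((P m * P n) * (ε * η ^ 2 / 256))), (by ring : 64 * (P m * P n) * (ε * η ^ 2 / 256) =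
            64 * ((P m * P n) * (ε * η ^ 2 / 256)))]
      _ = (η ^ 2 * (P m * P n)) * (ε / 4) := by ring
      _ ≤ W * (ε / 4) := mul_le_mul_of_nonneg_right hWlb (by positivity)
  have hfin : ‖u m n - ℓ‖ ≤ ε / 2 :=
    le_of_mul_le_mul_left (by linarith : W * ‖u m n - ℓ‖ ≤ W * (ε / 2)) hWpos
  linarith
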